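/- arXiv:math/0308128 — 2 statements merged into one kernel-verified Lean document; each statement's English description precedes it below -/
import Mathlib

section
/- Let u ∈ V be a nonzero isotropic vector and let T_u : Ŵ → Ŵ be the operator x ↦ u·x. Then the kernel of T_u equals the image of T_u; this subspace has dimension 4 and Q̂ vanishes identically on it. Moreover, for every 3-dimensional isotropic subspace U ⊆ V, one has L_U ⊆ Ker(T_u) if and only if u ∈ U. -/
namespace SSD

noncomputable section

/-- `V` is the 7-dimensional complex vector space `ℂ^7`. -/
abbrev V7 : Type := Fin 7 → ℂ

/-- `Ŵ` is the 8-dimensional spin space, with basis (in this order):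
`1, v̂₅, v̂₆, v̂₇, v̂₅v̂₆, v̂₆v̂₇, v̂₅v̂₇, v̂₅v̂₆v̂₇`. -/
abbrev W8 : Type := Fin 8 → ℂ

/-- The constant `1/√2` as a complex number. -/
def is2 : ℂ := ((Real.sqrt 2 : ℝ) : ℂ)⁻¹

/-- The Clifford action of `v ∈ V` on `x ∈ Ŵ`:  `e₅,e₆,e₇` act by exterior
multiplication by `v̂₅,v̂₆,v̂₇`; `e₁,e₂,e₃` act by `−∂/∂v̂₇, ∂/∂v̂₆, −∂/∂v̂₅`;
`e₄` acts by `(1/√2)·(−1)^deg`. Written out in coordinates. -/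
def actFun (v : V7) (x : W8) : W8 := fun k =>
  match k with
  | 0 => -(v 0) * x 3 + v 1 * x 2 - v 2 * x 1 + is2 * v 3 * x 0
  | 1 => v 0 * x 6 - v 1 * x 4 - is2 * v 3 * x 1 + v 4 * x 0
  | 2 => v 0 * x 5 - v 2 * x 4 - is2 * v 3 * x 2 + v 5 * x 0
  | 3 => v 1 * x 5 - v 2 * x 6 - is2 * v 3 * x 3 + v 6 * x 0
  | 4 => -(v 0) * x 7 + is2 * v 3 * x 4 + v 4 * x 2 - v 5 * x 1
  | 5 => -(v 2) * x 7 + is2 * v 3 * x 5 + v 5 * x 3 - v 6 * x 2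
  | 6 => -(v 1) * x 7 + is2 * v 3 * x 6 + v 4 * x 3 - v 6 * x 1
  | 7 => -(is2 * v 3) * x 7 + v 4 * x 5 - v 5 * x 6 + v 6 * x 4

/-- The action `v · x`, packaged as a bilinear map. -/
def act : V7 →ₗ[ℂ] W8 →ₗ[ℂ] W8 :=
  LinearMap.mk₂ ℂ actFun
    (fun m m' n => by funext k; fin_cases k <;> simp [actFun] <;> ring)
    (fun c m n => by funext k; fin_cases k <;> simp [actFun] <;> ring)
    (fun m n n' => by funext k; fin_cases k <;> simp [actFun] <;> ring)
    (fun c m n => by funext k; fin_cases k <;> simp [actFun] <;> ring)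

/-- The bilinear form `B` on `V`: `B(eᵢ,eⱼ) = (−1)^(i+1)` if `i+j=8`, else `0`. -/
def Bform (u w : V7) : ℂ :=
  u 0 * w 6 + u 6 * w 0 - u 1 * w 5 - u 5 * w 1 + u 2 * w 4 + u 4 * w 2 - u 3 * w 3

/-- The quadratic form `Q(v) = B(v,v)/2` on `V`. -/
def Qform (v : V7) : ℂ := Bform v v / 2

/-- The quadratic form `Q̂` on `Ŵ`:
`Q̂ = α_∅α₅₆₇ + α₆α₅₇ − α₇α₅₆ − α₆₇α₅` in the coordinates of the basis above. -/
def Qhat (x : W8) : ℂ := x 0 * x 7 + x 2 * x 6 - x 3 * x 4 - x 5 * x 1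

/-- The bilinear form `B̂(p,q) = Q̂(p+q) − Q̂(p) − Q̂(q)` on `Ŵ`. -/
def Bhat (p q : W8) : ℂ := Qhat (p + q) - Qhat p - Qhat q

/-- A subspace `U ⊆ V` is isotropic if `B` vanishes identically on it. -/
def IsIsotropic (U : Submodule ℂ V7) : Prop :=
  ∀ u ∈ U, ∀ w ∈ U, Bform u w = 0

/-- `L_U = {x ∈ Ŵ | u·x = 0 for all u ∈ U}`. -/
def LU (U : Submodule ℂ V7) : Submodule ℂ W8 :=
  ⨅ u ∈ U, LinearMap.ker (act u)

/-- `ψ : Ŵ → V` is an invariant surjection with spinor `p` if `p ≠ 0`, `ψ(p)=0`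
and `ψ(v·p) = v` for all `v ∈ V`. -/
def IsInvSurj (ψ : W8 →ₗ[ℂ] V7) (p : W8) : Prop :=
  p ≠ 0 ∧ ψ p = 0 ∧ ∀ v : V7, ψ (act v p) = v

lemma is2_mul_is2 : is2 * is2 = 2⁻¹ := by
  rw [is2, ← mul_inv, ← Complex.ofReal_mul, Real.mul_self_sqrt (by norm_num)]
  norm_num

lemma act_apply (v : V7) (x : W8) : act v x = actFun v x := rfl

lemma clifford (v w : V7) (x : W8) :
    act v (act w x) + act w (act v x) = -(Bform v w) • x := by
  have h := is2_mul_is2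
  have h0 : actFun v (actFun w x) 0 + actFun w (actFun v x) 0 = -(Bform v w) * x 0 := by
    simp only [actFun, Bform]; linear_combination (2 * v 3 * w 3 * x 0) * h
  have h1 : actFun v (actFun w x) 1 + actFun w (actFun v x) 1 = -(Bform v w) * x 1 := by
    simp only [actFun, Bform]; linear_combination (2 * v 3 * w 3 * x 1) * h
  have h2 : actFun v (actFun w x) 2 + actFun w (actFun v x) 2 = -(Bform v w) * x 2 := by
    simp only [actFun, Bform]; linear_combination (2 * v 3 * w 3 * x 2) * h
  have h3 : actFun v (actFun w x) 3 + actFun w (actFun v x) 3 = -(Bform v w) * x 3 := by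
    simp only [actFun, Bform]; linear_combination (2 * v 3 * w 3 * x 3) * h
  have h4 : actFun v (actFun w x) 4 + actFun w (actFun v x) 4 = -(Bform v w) * x 4 := by
    simp only [actFun, Bform]; linear_combination (2 * v 3 * w 3 * x 4) * h
  have h5 : actFun v (actFun w x) 5 + actFun w (actFun v x) 5 = -(Bform v w) * x 5 := by
    simp only [actFun, Bform]; linear_combination (2 * v 3 * w 3 * x 5) * h
  have h6 : actFun v (actFun w x) 6 + actFun w (actFun v x) 6 = -(Bform v w) * x 6 := by
    simp only [actFun, Bform]; linear_combination (2 * v 3 * w 3 * x 6) * h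
  have h7 : actFun v (actFun w x) 7 + actFun w (actFun v x) 7 = -(Bform v w) * x 7 := by
    simp only [actFun, Bform]; linear_combination (2 * v 3 * w 3 * x 7) * h
  funext k
  fin_cases k
  · exact h0
  · exact h1
  · exact h2
  · exact h3
  · exact h4
  · exact h5
  · exact h6
  · exact h7

lemma qhat_act (v : V7) (x : W8) : Qhat (act v x) = Qform v * Qhat x := by
  have h := is2_mul_is2
  simp only [act_apply, actFun, Qhat, Qform, Bform]
  linear_combination (-(v 3)^2 * (x 0 * x 7 + x 2 * x 6 - x 3 * x 4 - x 5 * x 1)) * h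


lemma bform_comm (a b : V7) : Bform a b = Bform b a := by simp only [Bform]; ring

lemma bform_self (u : V7) (hq : Qform u = 0) : Bform u u = 0 := by
  have : Bform u u / 2 = 0 := hq
  field_simp at this; simpa using this

lemma act_act_self (v : V7) (hv : Bform v v = 0) (x : W8) : act v (act v x) = 0 := by
  have h := clifford v v x
  rw [hv] at h
  have h2 : (2 : ℂ) • act v (act v x) = 0 := by
    rw [two_smul]; simpa using h
  simpa using (smul_eq_zero.1 h2).resolve_left (by norm_num)

lemma exists_w (u : V7) (hu : u ≠ 0) : ∃ w : V7, Bform u w = -1 := by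
  have hex : ∃ i, u i ≠ 0 := by
    by_contra h; push_neg at h; exact hu (funext h)
  obtain ⟨i, hi⟩ := hex
  fin_cases i
  · exact ⟨Pi.single 6 (-(u 0)⁻¹), by
      have hi' : u 0 ≠ 0 := hi
      simp [Bform, Pi.single_apply]; field_simp⟩
  · exact ⟨Pi.single 5 ((u 1)⁻¹), by
      have hi' : u 1 ≠ 0 := hi
      simp [Bform, Pi.single_apply]; field_simp⟩
  · exact ⟨Pi.single 4 (-(u 2)⁻¹), by
      have hi' : u 2 ≠ 0 := hi
      simp [Bform, Pi.single_apply]; field_simp⟩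
  · exact ⟨Pi.single 3 ((u 3)⁻¹), by
      have hi' : u 3 ≠ 0 := hi
      simp [Bform, Pi.single_apply]; field_simp⟩
  · exact ⟨Pi.single 2 (-(u 4)⁻¹), by
      have hi' : u 4 ≠ 0 := hi
      simp [Bform, Pi.single_apply]; field_simp⟩
  · exact ⟨Pi.single 1 ((u 5)⁻¹), by
      have hi' : u 5 ≠ 0 := hi
      simp [Bform, Pi.single_apply]; field_simp⟩
  · exact ⟨Pi.single 0 (-(u 6)⁻¹), by
      have hi' : u 6 ≠ 0 := hi
      simp [Bform, Pi.single_apply]; field_simp⟩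

/-- `B` as a bilinear map into the dual. -/
def BL : V7 →ₗ[ℂ] Module.Dual ℂ V7 :=
  LinearMap.mk₂ ℂ Bform
    (fun m m' n => by simp only [Bform, Pi.add_apply]; ring)
    (fun c m n => by simp only [Bform, Pi.smul_apply, smul_eq_mul]; ring)
    (fun m n n' => by simp only [Bform, Pi.add_apply]; ring)
    (fun c m n => by simp only [Bform, Pi.smul_apply, smul_eq_mul]; ring)

lemma BL_apply (v w : V7) : BL v w = Bform v w := rfl

lemma BL_inj : Function.Injective BL := by
  rw [← LinearMap.ker_eq_bot, Submodule.eq_bot_iff]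
  intro v hv
  rw [LinearMap.mem_ker] at hv
  have h : ∀ j : Fin 7, Bform v (Pi.single j 1) = 0 := fun j => by
    have := LinearMap.congr_fun hv (Pi.single j 1)
    simpa [BL_apply] using this
  have h0 := h 0; have h1 := h 1; have h2 := h 2; have h3 := h 3
  have h4 := h 4; have h5 := h 5; have h6 := h 6
  simp [Bform, Pi.single_apply] at h0 h1 h2 h3 h4 h5 h6
  funext i
  fin_cases i <;> simp_all

lemma isotropic_finrank_le (U : Submodule ℂ V7) (h : IsIsotropic U) :
    Module.finrank ℂ U ≤ 3 := by
  have hmap : U.map BL ≤ U.dualAnnihilator := by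
    rintro _ ⟨w, hw, rfl⟩
    rw [Submodule.mem_dualAnnihilator]
    intro z hz
    exact h w hw z hz
  have e : Module.finrank ℂ (U.map BL) = Module.finrank ℂ U :=
    (Submodule.equivMapOfInjective BL BL_inj U).symm.finrank_eq
  have hle : Module.finrank ℂ (U.map BL) ≤ Module.finrank ℂ U.dualAnnihilator :=
    Submodule.finrank_mono hmap
  have h1 := (Subspace.quotEquivAnnihilator U).finrank_eq
  have h2 := Submodule.finrank_quotient_add_finrank U
  have h3 : Module.finrank ℂ V7 = 7 := by simp
  omega

lemma half_dim (f : W8 →ₗ[ℂ] W8) (S : Submodule ℂ W8) (hS : ∀ x ∈ S, f x ∈ S)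
    (h2 : ∀ x : W8, f (f x) = 0) :
    Module.finrank ℂ S ≤ 2 * Module.finrank ℂ (LinearMap.ker f ⊓ S : Submodule ℂ W8) := by
  set g := f.restrict hS with hg
  have hrk := LinearMap.finrank_range_add_finrank_ker g
  have hle : LinearMap.range g ≤ LinearMap.ker g := by
    rintro y ⟨z, rfl⟩
    rw [LinearMap.mem_ker]
    apply Subtype.ext
    have : (g (g z) : W8) = f (f (z : W8)) := by
      simp [hg, LinearMap.restrict_apply]
    simpa [this] using h2 (z : W8)
  have h1 : Module.finrank ℂ (LinearMap.range g) ≤ Module.finrank ℂ (LinearMap.ker g) :=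
    Submodule.finrank_mono hle
  have hker : Module.finrank ℂ (LinearMap.ker g) =
      Module.finrank ℂ (LinearMap.ker f ⊓ S : Submodule ℂ W8) := by
    rw [LinearMap.ker_restrict, ← Submodule.finrank_map_subtype_eq S,
      Submodule.map_comap_subtype, inf_comm]
  omega

lemma mem_LU_of_basis (U : Submodule ℂ V7) (b : Module.Basis (Fin 3) ℂ U) (x : W8)
    (h : ∀ i, act (b i : V7) x = 0) : x ∈ LU U := by
  simp only [LU, Submodule.mem_iInf]
  intro v hv
  rw [LinearMap.mem_ker]
  have hrep : v = ∑ i, b.repr ⟨v, hv⟩ i • (b i : V7) := by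
    have := congrArg (Submodule.subtype U) (b.sum_repr ⟨v, hv⟩)
    simp only [map_sum, map_smul, Submodule.subtype_apply] at this; exact this.symm
  rw [hrep]
  have : act (∑ i, b.repr ⟨v, hv⟩ i • (b i : V7)) x
      = (act.flip x) (∑ i, b.repr ⟨v, hv⟩ i • (b i : V7)) := rfl
  rw [this, map_sum]
  simp only [map_smul]
  have hz : ∀ i, act.flip x (b i : V7) = 0 := fun i => h i
  simp [hz]

lemma lu_act (U : Submodule ℂ V7) {x : W8} (hx : x ∈ LU U) {w : V7} (hw : w ∈ U) :
    act w x = 0 := by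
  have := (Submodule.mem_iInf _).1 hx w
  have := (Submodule.mem_iInf _).1 this hw
  rwa [LinearMap.mem_ker] at this

lemma lu_ne_bot (U : Submodule ℂ V7) (h3 : Module.finrank ℂ U = 3) (hiso : IsIsotropic U) :
    ∃ x : W8, x ∈ LU U ∧ x ≠ 0 := by
  have b : Module.Basis (Fin 3) ℂ U := Module.finBasisOfFinrankEq ℂ U h3
  set u0 : V7 := (b 0 : V7)
  set u1 : V7 := (b 1 : V7)
  set u2 : V7 := (b 2 : V7)
  have hmem : ∀ i, ((b i : U) : V7) ∈ U := fun i => (b i).2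
  have hB : ∀ i j, Bform ((b i : U) : V7) ((b j : U) : V7) = 0 :=
    fun i j => hiso _ (hmem i) _ (hmem j)
  have hsq : ∀ i (x : W8), act ((b i : U) : V7) (act ((b i : U) : V7) x) = 0 :=
    fun i x => act_act_self _ (hB i i) x
  -- chain of kernels
  set S1 : Submodule ℂ W8 := LinearMap.ker (act u0) ⊓ ⊤ with hS1
  set S2 : Submodule ℂ W8 := LinearMap.ker (act u1) ⊓ S1 with hS2
  set S3 : Submodule ℂ W8 := LinearMap.ker (act u2) ⊓ S2 with hS3
  have hstep : ∀ (a c : V7), Bform a c = 0 → ∀ x : W8, act a x = 0 → act a (act c x) = 0 := by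
    intro a c hac x hx
    have h := clifford a c x
    rw [hac] at h
    have : act a (act c x) + act c (act a x) = 0 := by simpa using h
    rw [hx] at this
    simpa using this
  have d1 : 4 ≤ Module.finrank ℂ S1 := by
    have h := half_dim (act u0) ⊤ (fun x _ => trivial) (hsq 0)
    rw [← hS1] at h
    have ht : Module.finrank ℂ (⊤ : Submodule ℂ W8) = 8 := by
      rw [finrank_top]; simp
    omega
  have d2 : 2 ≤ Module.finrank ℂ S2 := by
    have hinv : ∀ x ∈ S1, act u1 x ∈ S1 := by
      intro x hx
      have hx0 := LinearMap.mem_ker.1 (Submodule.mem_inf.1 hx).1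
      exact Submodule.mem_inf.2 ⟨LinearMap.mem_ker.2 (hstep u0 u1 (hB 0 1) x hx0), trivial⟩
    have h := half_dim (act u1) S1 hinv (hsq 1)
    rw [← hS2] at h
    omega
  have d3 : 1 ≤ Module.finrank ℂ S3 := by
    have hinv : ∀ x ∈ S2, act u2 x ∈ S2 := by
      intro x hx
      have hx1 := LinearMap.mem_ker.1 (Submodule.mem_inf.1 hx).1
      have hx0 := LinearMap.mem_ker.1 (Submodule.mem_inf.1 (Submodule.mem_inf.1 hx).2).1
      refine Submodule.mem_inf.2 ⟨LinearMap.mem_ker.2 (hstep u1 u2 (hB 1 2) x hx1),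
        Submodule.mem_inf.2 ⟨LinearMap.mem_ker.2 (hstep u0 u2 (hB 0 2) x hx0), trivial⟩⟩
    have h := half_dim (act u2) S2 hinv (hsq 2)
    rw [← hS3] at h
    omega
  have hne : S3 ≠ ⊥ := by
    intro hbot
    rw [hbot] at d3
    simp at d3
  obtain ⟨x, hxS, hx0⟩ := (Submodule.ne_bot_iff _).1 hne
  refine ⟨x, ?_, hx0⟩
  have h2' := (Submodule.mem_inf.1 hxS).1
  have h1' := (Submodule.mem_inf.1 (Submodule.mem_inf.1 hxS).2).1
  have h0' := (Submodule.mem_inf.1 (Submodule.mem_inf.1 (Submodule.mem_inf.1 hxS).2).2).1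
  apply mem_LU_of_basis U b
  intro i
  fin_cases i
  · exact LinearMap.mem_ker.1 h0'
  · exact LinearMap.mem_ker.1 h1'
  · exact LinearMap.mem_ker.1 h2'

/-- for a nonzero isotropic `u ∈ V`, `Ker(T_u) = Im(T_u)` where
`T_u : x ↦ u·x`; this subspace has dimension 4, `Q̂` vanishes on it, and for
every 3-dimensional isotropic `U ⊆ V` one has `L_U ⊆ Ker(T_u) ↔ u ∈ U`. -/
theorem statement_8 (u : V7) (hu : u ≠ 0) (hq : Qform u = 0) :
    LinearMap.ker (act u) = LinearMap.range (act u) ∧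
    Module.finrank ℂ (LinearMap.ker (act u)) = 4 ∧
    (∀ x ∈ LinearMap.ker (act u), Qhat x = 0) ∧
    (∀ U : Submodule ℂ V7, Module.finrank ℂ U = 3 → IsIsotropic U →
      (LU U ≤ LinearMap.ker (act u) ↔ u ∈ U)) := by
  have hBuu : Bform u u = 0 := bform_self u hq
  have hkr : LinearMap.ker (act u) = LinearMap.range (act u) := by
    apply le_antisymm
    · intro x hx
      rw [LinearMap.mem_ker] at hx
      obtain ⟨w, hw⟩ := exists_w u hu
      refine ⟨act w x, ?_⟩
      have h := clifford u w x
      rw [hw, hx] at h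
      simpa using h
    · rintro x ⟨y, rfl⟩
      exact LinearMap.mem_ker.2 (act_act_self u hBuu y)
  refine ⟨hkr, ?_, ?_, ?_⟩
  · have h := LinearMap.finrank_range_add_finrank_ker (act u)
    rw [← hkr] at h
    have h8 : Module.finrank ℂ W8 = 8 := by simp
    omega
  · intro x hx
    rw [hkr] at hx
    obtain ⟨y, rfl⟩ := hx
    rw [qhat_act, hq, zero_mul]
  · intro U h3 hiso
    constructor
    · intro hle
      obtain ⟨x, hxLU, hx0⟩ := lu_ne_bot U h3 hiso
      have hBu : ∀ w ∈ U, Bform u w = 0 := by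
        intro w hw
        have haux := clifford u w x
        rw [lu_act U hxLU hw] at haux
        have hux : act u x = 0 := LinearMap.mem_ker.1 (hle hxLU)
        rw [hux] at haux
        simp only [map_zero, add_zero, zero_add] at haux
        have hs : (-(Bform u w)) • x = 0 := haux.symm
        rcases smul_eq_zero.1 hs with h | h
        · exact neg_eq_zero.1 h
        · exact absurd h hx0
      have hiso' : IsIsotropic (U ⊔ Submodule.span ℂ {u}) := by
        intro a ha b hb
        rw [Submodule.mem_sup] at ha hb
        obtain ⟨wa, hwa, za, hza, rfl⟩ := ha
        obtain ⟨wb, hwb, zb, hzb, rfl⟩ := hb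
        obtain ⟨ca, rfl⟩ := Submodule.mem_span_singleton.1 hza
        obtain ⟨cb, rfl⟩ := Submodule.mem_span_singleton.1 hzb
        have e : Bform (wa + ca • u) (wb + cb • u) =
            Bform wa wb + cb * Bform wa u + ca * Bform u wb + ca * (cb * Bform u u) := by
          simp only [Bform, Pi.add_apply, Pi.smul_apply, smul_eq_mul]; ring
        rw [e, hiso wa hwa wb hwb, bform_comm wa u, hBu wa hwa, hBu wb hwb, hBuu]
        ring
      have hle3 := isotropic_finrank_le _ hiso'
      have hEq : U = U ⊔ Submodule.span ℂ {u} :=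
        Submodule.eq_of_le_of_finrank_le le_sup_left (by rw [h3]; exact hle3)
      rw [hEq]
      exact le_sup_right (a := U) (Submodule.mem_span_singleton_self u)
    · intro hUu x hx
      exact LinearMap.mem_ker.2 (lu_act U hx hUu)


end
end SSD
end

section
/- If ψ : Ŵ → V is an invariant surjection with spinor p, then Q̂(p) ≠ 0. -/
namespace SSD

noncomputable section

lemma is2_sq : is2 * is2 = 1/2 := by
  have h : ((Real.sqrt 2 : ℝ) : ℂ) * ((Real.sqrt 2 : ℝ) : ℂ) = 2 := by
    norm_cast
    rw [Real.mul_self_sqrt]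
    norm_num
  rw [is2, ← mul_inv, h]
  norm_num

lemma key_expand (u w : V7) (a b : ℂ) (x : W8) (hQ : Qhat x = 0) :
    Bhat (act u x + a • x) (act w x + b • x) = 0 := by
  have hs := is2_sq
  have hQ' : x 0 * x 7 + x 2 * x 6 - x 3 * x 4 - x 5 * x 1 = 0 := hQ
  simp only [Bhat, Qhat, act, LinearMap.mk₂_apply, actFun, Pi.add_apply,
    Pi.smul_apply, smul_eq_mul]
  linear_combination (u 0*w 6 + u 6*w 0 - u 1*w 5 - u 5*w 1 + u 2*w 4 + u 4*w 2 - u 3*w 3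
      + 2*a*b) * hQ'
    + (-2*(u 3)*(w 3)*(x 0*x 7 + x 2*x 6 - x 3*x 4 - x 5*x 1)) * hs

/-- if `ψ : Ŵ → V` is an invariant surjection with spinor `p`,
then `Q̂(p) ≠ 0` (i.e. `p` is non-isotropic). -/
theorem statement_10 (ψ : W8 →ₗ[ℂ] V7) (p : W8) (h : IsInvSurj ψ p) :
    Qhat p ≠ 0 := by
  obtain ⟨hp0, hψp, hψa⟩ := h
  intro hQ
  -- ψ is surjective
  have hsurj : Function.Surjective ψ := fun v => ⟨act v p, hψa v⟩
  have hrange : LinearMap.range ψ = ⊤ := LinearMap.range_eq_top.mpr hsurj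
  have hW : Module.finrank ℂ W8 = 8 := by simp [W8]
  have hV : Module.finrank ℂ V7 = 7 := by simp [V7]
  have hrk := LinearMap.finrank_range_add_finrank_ker ψ
  rw [hrange, finrank_top, hV, hW] at hrk
  have hker1 : Module.finrank ℂ (LinearMap.ker ψ) = 1 := by omega
  have hpker : p ∈ LinearMap.ker ψ := hψp
  have hle : Submodule.span ℂ {p} ≤ LinearMap.ker ψ := by
    rw [Submodule.span_le]; simpa using hpker
  have hker : Submodule.span ℂ ({p} : Set W8) = LinearMap.ker ψ :=
    Submodule.eq_of_le_of_finrank_eq hle (by rw [hker1, finrank_span_singleton hp0])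
  -- decompose any q as act (ψ q) p + c • p
  have hdec : ∀ q : W8, ∃ c : ℂ, q = act (ψ q) p + c • p := by
    intro q
    have hmem : q - act (ψ q) p ∈ LinearMap.ker ψ := by
      simp [LinearMap.mem_ker, map_sub, hψa]
    rw [← hker, Submodule.mem_span_singleton] at hmem
    obtain ⟨c, hc⟩ := hmem
    exact ⟨c, by rw [hc]; abel⟩
  -- hence Bhat vanishes identically
  have hB : ∀ q r : W8, Bhat q r = 0 := by
    intro q r
    obtain ⟨a, ha⟩ := hdec q
    obtain ⟨b, hb⟩ := hdec r
    rw [ha, hb]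
    exact key_expand _ _ _ _ _ hQ
  -- but Bhat δ₀ δ₇ = 1
  have e7 : (![0,0,0,0,0,0,0,1] : W8) 7 = 1 := rfl
  have := hB ![1,0,0,0,0,0,0,0] ![0,0,0,0,0,0,0,1]
  norm_num [Bhat, Qhat, e7] at this
  simp [Matrix.cons_val] at this


end
end SSD
end
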